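/- The derivations ∂₁, …, ∂_l of the algebra A(l₁,l₂,l₃;Γ) are F-linearly independent, provided Γ is a nondegenerate additive subgroup of F^{l₂+l₃}. -/

import Mathlib

open scoped BigOperators

namespace SDF

variable (F : Type) [Field F] [IsAlgClosed F] [CharZero F]
variable (l₁ l₂ l₃ : ℕ) (Γ : AddSubgroup (Fin (l₂ + l₃) → F))

/-- The semigroup algebra `A(l₁,l₂,l₃;Γ) = F[Γ × ℕ^{l₁+l₂}]`,
with basis `x^α t^i` for `α ∈ Γ`, `i ∈ ℕ^{l₁+l₂}`. -/
abbrev Alg : Type := AddMonoidAlgebra F (↥Γ × (Fin (l₁ + l₂) →₀ ℕ))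

/-- The basis monomial `x^α t^i`. -/
noncomputable def mono (α : Γ) (i : Fin (l₁ + l₂) →₀ ℕ) : Alg F l₁ l₂ l₃ Γ :=
  AddMonoidAlgebra.single (α, i) 1

/-- The `p`-th coordinate of `α ∈ Γ ⊆ F^{l₂+l₃}`, with the convention `α_p = 0` for `p ≤ l₁`. -/
def acoord (p : Fin (l₁ + l₂ + l₃)) (α : Γ) : F :=
  if h : l₁ ≤ (p : ℕ) then (α : Fin (l₂ + l₃) → F) ⟨(p : ℕ) - l₁, by have := p.isLt; omega⟩
  else 0

/-- The `p`-th coordinate of a general `μ ∈ F^{l₂+l₃}`, with the convention `μ_p = 0` for `p ≤ l₁`. -/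
def fcoord (p : Fin (l₁ + l₂ + l₃)) (μ : Fin (l₂ + l₃) → F) : F :=
  if h : l₁ ≤ (p : ℕ) then μ ⟨(p : ℕ) - l₁, by have := p.isLt; omega⟩ else 0

/-- The `p`-th component of `i ∈ ℕ^{l₁+l₂}`, with the convention `i_p = 0` for `p > l₁+l₂`. -/
def icoord (p : Fin (l₁ + l₂ + l₃)) (i : Fin (l₁ + l₂) →₀ ℕ) : ℕ :=
  if h : (p : ℕ) < l₁ + l₂ then i ⟨(p : ℕ), h⟩ else 0

/-- `i - 1_[p]` (truncated subtraction; only used with coefficient `i_p`). -/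
noncomputable def lower (p : Fin (l₁ + l₂ + l₃)) (i : Fin (l₁ + l₂) →₀ ℕ) : Fin (l₁ + l₂) →₀ ℕ :=
  if h : (p : ℕ) < l₁ + l₂ then i - Finsupp.single ⟨(p : ℕ), h⟩ 1 else i

/-- The derivation `∂_p` of `A(l₁,l₂,l₃;Γ)`:
`∂_p(x^α t^i) = α_p x^α t^i + i_p x^α t^{i - 1_[p]}`. -/
noncomputable def pd (p : Fin (l₁ + l₂ + l₃)) :
    Alg F l₁ l₂ l₃ Γ →ₗ[F] Alg F l₁ l₂ l₃ Γ :=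
  (Finsupp.lsum F fun g : ↥Γ × (Fin (l₁ + l₂) →₀ ℕ) =>
    LinearMap.toSpanSingleton F (Alg F l₁ l₂ l₃ Γ)
      (acoord F l₁ l₂ l₃ Γ p g.1 • mono F l₁ l₂ l₃ Γ g.1 g.2
        + (icoord l₁ l₂ l₃ p g.2 : F) • mono F l₁ l₂ l₃ Γ g.1 (lower l₁ l₂ l₃ p g.2)))
    ∘ₗ (AddMonoidAlgebra.coeffLinearEquiv F).toLinearMap

/-- The Witt algebra `W(l₁,l₂,l₃;Γ) = A·D`; the tuple `u : Wt` represents `Σ_p u_p ∂_p`. -/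
abbrev Wt : Type := Fin (l₁ + l₂ + l₃) → Alg F l₁ l₂ l₃ Γ

/-- The Lie bracket of `W(l₁,l₂,l₃;Γ)`:
`[Σ_p u_p ∂_p, Σ_q v_q ∂_q] = Σ_{p,q} (u_p ∂_p(v_q) - v_p ∂_p(u_q)) ∂_q`. -/
noncomputable def wbr (u v : Wt F l₁ l₂ l₃ Γ) : Wt F l₁ l₂ l₃ Γ :=
  fun r => ∑ p, (u p * pd F l₁ l₂ l₃ Γ p (v r) - v p * pd F l₁ l₂ l₃ Γ p (u r))

/-- `D_{p,q}(u) = ∂_p(u) ∂_q - ∂_q(u) ∂_p`. -/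
noncomputable def Dpq (p q : Fin (l₁ + l₂ + l₃)) (u : Alg F l₁ l₂ l₃ Γ) :
    Wt F l₁ l₂ l₃ Γ :=
  Pi.single q (pd F l₁ l₂ l₃ Γ p u) - Pi.single p (pd F l₁ l₂ l₃ Γ q u)

/-- The divergence-free algebra `S(l₁,l₂,l₃;0,Γ) = Span{D_{p,q}(u)}`. -/
noncomputable def Ssub : Submodule F (Wt F l₁ l₂ l₃ Γ) :=
  Submodule.span F {w | ∃ p q u, w = Dpq F l₁ l₂ l₃ Γ p q u}

/-- `Γ` is nondegenerate: it contains an `F`-basis of `F^{l₂+l₃}`, i.e. it spans. -/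
def Nondeg : Prop := Submodule.span F (Γ : Set (Fin (l₂ + l₃) → F)) = ⊤

/-- The divergence `div(Σ_p u_p ∂_p) = Σ_p ∂_p(u_p)`. -/
noncomputable def dvg (w : Wt F l₁ l₂ l₃ Γ) : Alg F l₁ l₂ l₃ Γ :=
  ∑ p, pd F l₁ l₂ l₃ Γ p (w p)

/-- The action of `Σ_p u_p ∂_p ∈ W` on `A_μ` (the space `A` with basis `v_{β,i}` the monomials):
`(u ∂_p) . v = u * (∂_p + μ_p) v`. On basis elements this gives exactly the defining formulas
of the module `A_μ`. -/
noncomputable def actW (μ : Fin (l₂ + l₃) → F) (X : Wt F l₁ l₂ l₃ Γ) :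
    Alg F l₁ l₂ l₃ Γ →ₗ[F] Alg F l₁ l₂ l₃ Γ :=
  ∑ p, (LinearMap.mulLeft F (X p)).comp
    (pd F l₁ l₂ l₃ Γ p + fcoord F l₁ l₂ l₃ p μ • LinearMap.id)

/-- The element `Σ_p a_p ∂_p` of `D ⊆ W`. -/
noncomputable def wD (a : Fin (l₁ + l₂ + l₃) → F) : Wt F l₁ l₂ l₃ Γ :=
  fun p => algebraMap F (Alg F l₁ l₂ l₃ Γ) (a p)

/-- The element `∂_p ∈ W`. -/
noncomputable def wdelta (p : Fin (l₁ + l₂ + l₃)) : Wt F l₁ l₂ l₃ Γ :=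
  Pi.single p 1

/-- `β(∂) = Σ_{p>l₁} a_p β_p` for `∂ = Σ_p a_p ∂_p`. -/
def beval (β : Fin (l₂ + l₃) → F) (a : Fin (l₁ + l₂ + l₃) → F) : F :=
  ∑ p, a p * fcoord F l₁ l₂ l₃ p β


omit [IsAlgClosed F] [CharZero F] in
lemma pd_mono (p : Fin (l₁ + l₂ + l₃)) (α : Γ) (i : Fin (l₁ + l₂) →₀ ℕ) :
    pd F l₁ l₂ l₃ Γ p (mono F l₁ l₂ l₃ Γ α i)
      = acoord F l₁ l₂ l₃ Γ p α • mono F l₁ l₂ l₃ Γ α i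
        + (icoord l₁ l₂ l₃ p i : F) • mono F l₁ l₂ l₃ Γ α (lower l₁ l₂ l₃ p i) := by
  unfold pd
  rw [LinearMap.comp_apply]
  erw [Finsupp.lsum_single]
  simp [LinearMap.toSpanSingleton_apply]

omit [IsAlgClosed F] [CharZero F] in
lemma mono_ne_zero (α : Γ) (i : Fin (l₁ + l₂) →₀ ℕ) : mono F l₁ l₂ l₃ Γ α i ≠ 0 := by
  unfold mono
  rw [ne_eq, AddMonoidAlgebra.single_eq_zero]
  exact one_ne_zero

omit [IsAlgClosed F] [CharZero F] in
lemma key_eval (g : Fin (l₁ + l₂ + l₃) → F)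
    (hg : ∑ q, g q • pd F l₁ l₂ l₃ Γ q = 0) (a : Alg F l₁ l₂ l₃ Γ) :
    ∑ q, g q • pd F l₁ l₂ l₃ Γ q a = 0 := by
  have := LinearMap.congr_fun hg a
  simpa using this

/-- The derivations `∂_1, …, ∂_l` of `A(l₁,l₂,l₃;Γ)` are `F`-linearly independent, provided
`Γ` is a nondegenerate additive subgroup of `F^{l₂+l₃}`. -/
theorem stmt2 [IsAlgClosed F] [CharZero F] (hl : 0 < l₁ + l₂ + l₃)
    (hΓ : Nondeg F l₂ l₃ Γ) :
    LinearIndependent F (fun p : Fin (l₁ + l₂ + l₃) => pd F l₁ l₂ l₃ Γ p) := by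
  rw [Fintype.linearIndependent_iff]
  intro g hg p
  by_cases hp : (p : ℕ) < l₁ + l₂
  · -- use the monomial x^0 t^{e_p}
    set q : Fin (l₁ + l₂) := ⟨(p : ℕ), hp⟩
    have h0 := key_eval F l₁ l₂ l₃ Γ g hg
      (mono F l₁ l₂ l₃ Γ 0 (Finsupp.single q 1))
    simp only [pd_mono] at h0
    rw [Finset.sum_eq_single p] at h0
    · have ha : acoord F l₁ l₂ l₃ Γ p (0 : Γ) = 0 := by
        simp only [acoord]; split <;> simp
      have hlow : lower l₁ l₂ l₃ p (Finsupp.single q 1) = 0 := by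
        simp only [lower, dif_pos hp]
        simp [q]
      have hic : icoord l₁ l₂ l₃ p (Finsupp.single q 1) = 1 := by
        simp only [icoord, dif_pos hp]
        simp [q]
      rw [ha, hlow, hic] at h0
      simp only [zero_smul, zero_add, Nat.cast_one, one_smul] at h0
      rcases smul_eq_zero.mp h0 with h | h
      · exact h
      · exact absurd h (mono_ne_zero F l₁ l₂ l₃ Γ _ _)
    · intro r _ hr
      have hicoord : (icoord l₁ l₂ l₃ r (Finsupp.single q 1) : F) = 0 := by
        simp only [icoord]
        split
        · rename_i h
          rw [Finsupp.single_apply, if_neg]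
          · simp
          · intro he
            apply hr
            apply Fin.ext
            have : (q : ℕ) = (r : ℕ) := congrArg Fin.val he
            simpa [q] using this.symm
        · simp
      simp [mono, acoord, hicoord]
    · simp
  · -- l₁ ≤ p; use monomials x^α
    have hlp : l₁ ≤ (p : ℕ) := by omega
    have hfadd : ∀ (r : Fin (l₁ + l₂ + l₃)) (μ ν : Fin (l₂ + l₃) → F),
        fcoord F l₁ l₂ l₃ r (μ + ν) = fcoord F l₁ l₂ l₃ r μ + fcoord F l₁ l₂ l₃ r ν := by
      intro r μ ν; simp only [fcoord]; split <;> simp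
    have hfsmul : ∀ (r : Fin (l₁ + l₂ + l₃)) (c : F) (μ : Fin (l₂ + l₃) → F),
        fcoord F l₁ l₂ l₃ r (c • μ) = c * fcoord F l₁ l₂ l₃ r μ := by
      intro r c μ; simp only [fcoord]; split <;> simp
    let φ : (Fin (l₂ + l₃) → F) →ₗ[F] F :=
      { toFun := fun μ => ∑ r, g r * fcoord F l₁ l₂ l₃ r μ
        map_add' := by
          intro μ ν
          rw [← Finset.sum_add_distrib]
          exact Finset.sum_congr rfl fun r _ => by rw [hfadd, mul_add]
        map_smul' := by
          intro c μ
          simp only [RingHom.id_apply, smul_eq_mul, Finset.mul_sum]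
          exact Finset.sum_congr rfl fun r _ => by rw [hfsmul]; ring }
    have hker : ∀ α : Γ, φ (α : Fin (l₂ + l₃) → F) = 0 := by
      intro α
      have h0 := key_eval F l₁ l₂ l₃ Γ g hg (mono F l₁ l₂ l₃ Γ α 0)
      simp only [pd_mono, icoord] at h0
      have h0' : ∑ r, (g r * acoord F l₁ l₂ l₃ Γ r α) • mono F l₁ l₂ l₃ Γ α 0 = 0 := by
        rw [← h0]
        refine Finset.sum_congr rfl fun r _ => ?_
        split <;> simp [mul_smul]
      rw [← Finset.sum_smul] at h0'
      have : ∑ r, g r * acoord F l₁ l₂ l₃ Γ r α = 0 := by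
        rcases smul_eq_zero.mp h0' with h | h
        · exact h
        · exact absurd h (mono_ne_zero F l₁ l₂ l₃ Γ _ _)
      rw [← this]
      show ∑ r, g r * fcoord F l₁ l₂ l₃ r (α : Fin (l₂ + l₃) → F)
          = ∑ r, g r * acoord F l₁ l₂ l₃ Γ r α
      refine Finset.sum_congr rfl fun r _ => ?_
      simp [fcoord, acoord]
    have hall : ∀ μ : Fin (l₂ + l₃) → F, φ μ = 0 := by
      have hsub : (Γ : Set (Fin (l₂ + l₃) → F)) ⊆ (LinearMap.ker φ : Set _) := by
        intro μ hμ
        exact hker ⟨μ, hμ⟩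
      have hspan : Submodule.span F (Γ : Set (Fin (l₂ + l₃) → F)) ≤ LinearMap.ker φ :=
        Submodule.span_le.mpr hsub
      rw [hΓ] at hspan
      intro μ
      exact hspan Submodule.mem_top
    have hj : (p : ℕ) - l₁ < l₂ + l₃ := by have := p.isLt; omega
    have hev := hall (Pi.single (⟨(p : ℕ) - l₁, hj⟩ : Fin (l₂ + l₃)) (1 : F))
    simp only [LinearMap.coe_mk, AddHom.coe_mk, φ] at hev
    rw [Finset.sum_eq_single p] at hev
    · simpa [fcoord, hlp, Pi.single_apply] using hev
    · intro r _ hr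
      rcases Nat.lt_or_ge (r : ℕ) l₁ with h | h
      · simp [fcoord, Nat.not_le.mpr h]
      · rw [fcoord, dif_pos h, Pi.single_apply, if_neg, mul_zero]
        intro he
        apply hr
        apply Fin.ext
        have : (r : ℕ) - l₁ = (p : ℕ) - l₁ := congrArg Fin.val he
        omega
    · simp


end SDF
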